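/- Let f : ℝ → [0, ∞) be an integrable function that is log-concave on ℝ, i.e. f(θx + (1−θ)y) ≥ f(x)^θ · f(y)^{1−θ} for all x, y ∈ ℝ and θ ∈ [0, 1]. Then the upper-tail function G(x) = ∫_x^∞ f(t) dt is log-concave on ℝ, i.e. G(θx + (1−θ)y) ≥ G(x)^θ · G(y)^{1−θ} for all x, y ∈ ℝ and θ ∈ [0, 1]. In particular, if a random variable X has a log-concave probability density f, then its tail distribution F̄_X(x) = Pr(X > x) is log-concave. -/

import Mathlib

open MeasureTheory Set Pointwise ENNReal NNReal Filter

/-- `f` is log-concave on `D`: `f(θx + (1−θ)y) ≥ f(x)^θ f(y)^{1−θ}`. -/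
def LogConcaveOn (D : Set ℝ) (f : ℝ → ℝ) : Prop :=
  ∀ ⦃x⦄, x ∈ D → ∀ ⦃y⦄, y ∈ D → ∀ ⦃θ : ℝ⦄, θ ∈ Set.Icc (0 : ℝ) 1 →
    f x ^ θ * f y ^ (1 - θ) ≤ f (θ * x + (1 - θ) * y)

lemma sumset_meas (K L : Set ℝ) (hK : IsCompact K) (hL : IsCompact L)
    (hKn : K.Nonempty) (hLn : L.Nonempty) :
    volume K + volume L ≤ volume (K + L) := by
  set a := sSup K with ha
  set b := sInf L with hb
  have haK : a ∈ K := hK.sSup_mem hKn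
  have hbL : b ∈ L := hL.sInf_mem hLn
  have hS : (b +ᵥ K) ∪ (a +ᵥ L) ⊆ K + L := by
    rintro z (⟨k, hk, rfl⟩ | ⟨l, hl, rfl⟩)
    · refine ⟨k, hk, b, hbL, ?_⟩
      simp [vadd_eq_add, add_comm]
    · exact ⟨a, haK, l, hl, rfl⟩
  have hinter : (b +ᵥ K) ∩ (a +ᵥ L) ⊆ {a + b} := by
    rintro z ⟨⟨k, hk, hz1⟩, ⟨l, hl, hz2⟩⟩
    simp only [vadd_eq_add] at hz1 hz2
    have h1 := le_csSup hK.bddAbove hk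
    have h2 := csInf_le hL.bddBelow hl
    simp only [mem_singleton_iff]
    rw [← hz1]; rw [← hz1] at hz2
    have : b + k ≤ b + a := by linarith
    have : a + b ≤ a + l := by linarith
    linarith
  have h0 : volume ((b +ᵥ K) ∩ (a +ᵥ L)) = 0 :=
    le_antisymm (le_trans (measure_mono hinter) (by simp)) zero_le
  have key := measure_union_add_inter (μ := volume) (b +ᵥ K) (hL.vadd a).measurableSet
  rw [h0, add_zero] at key
  calc volume K + volume L = volume (b +ᵥ K) + volume (a +ᵥ L) := by
        rw [measure_vadd, measure_vadd]
      _ = volume ((b +ᵥ K) ∪ (a +ᵥ L)) := key.symm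
      _ ≤ volume (K + L) := measure_mono hS

lemma sumset_meas_scaled {θ : ℝ} (hθ : θ ∈ Ioo (0:ℝ) 1) (A B C : Set ℝ)
    (hA : MeasurableSet A) (hB : MeasurableSet B)
    (hAn : A.Nonempty) (hBn : B.Nonempty)
    (hAfin : volume A ≠ ⊤) (hBfin : volume B ≠ ⊤)
    (hsub : ∀ s ∈ A, ∀ t ∈ B, θ * s + (1 - θ) * t ∈ C) :
    ENNReal.ofReal θ * volume A + ENNReal.ofReal (1 - θ) * volume B ≤ volume C := by
  obtain ⟨hθ0, hθ1⟩ := hθ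
  apply ENNReal.le_of_forall_pos_le_add
  intro ε hε hC
  have hε2 : ((ε : ℝ≥0∞)/2) ≠ 0 := by
    simp [ENNReal.div_eq_zero_iff, hε.ne']
  obtain ⟨K₀, hK₀A, hK₀c, hK₀v⟩ := hA.exists_isCompact_lt_add hAfin hε2
  obtain ⟨L₀, hL₀B, hL₀c, hL₀v⟩ := hB.exists_isCompact_lt_add hBfin hε2
  obtain ⟨p, hp⟩ := hAn
  obtain ⟨q, hq⟩ := hBn
  set K : Set ℝ := K₀ ∪ {p} with hKdef
  set L : Set ℝ := L₀ ∪ {q} with hLdef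
  have hKc : IsCompact K := hK₀c.union isCompact_singleton
  have hLc : IsCompact L := hL₀c.union isCompact_singleton
  have hKA : K ⊆ A := union_subset hK₀A (by simpa using hp)
  have hLB : L ⊆ B := union_subset hL₀B (by simpa using hq)
  have hKn : K.Nonempty := ⟨p, by simp [hKdef]⟩
  have hLn : L.Nonempty := ⟨q, by simp [hLdef]⟩
  -- scaled sets
  have hsub2 : (θ • K) + ((1 - θ) • L) ⊆ C := by
    rintro z ⟨u, ⟨s, hs, rfl⟩, v, ⟨t, ht, rfl⟩, rfl⟩
    exact hsub s (hKA hs) t (hLB ht)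
  have hvol : volume (θ • K) + volume ((1 - θ) • L) ≤ volume C := by
    refine le_trans ?_ (measure_mono hsub2)
    exact sumset_meas _ _ (hKc.smul θ) (hLc.smul (1 - θ))
      (hKn.smul_set) (hLn.smul_set)
  have e1 : volume (θ • K) = ENNReal.ofReal θ * volume K := by
    rw [Measure.addHaar_smul_of_nonneg volume hθ0.le K]
    norm_num
  have e2 : volume ((1 - θ) • L) = ENNReal.ofReal (1 - θ) * volume L := by
    rw [Measure.addHaar_smul_of_nonneg volume (by linarith) L]
    norm_num
  have hKK : volume K₀ ≤ volume K := measure_mono subset_union_left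
  have hLL : volume L₀ ≤ volume L := measure_mono subset_union_left
  have hKv : volume A ≤ volume K + ε/2 := hK₀v.le.trans (add_le_add_left hKK _)
  have hLv : volume B ≤ volume L + ε/2 := hL₀v.le.trans (add_le_add_left hLL _)
  have hone : ENNReal.ofReal θ + ENNReal.ofReal (1 - θ) = 1 := by
    rw [← ENNReal.ofReal_add hθ0.le (by linarith)]; norm_num
  calc ENNReal.ofReal θ * volume A + ENNReal.ofReal (1 - θ) * volume B
      ≤ ENNReal.ofReal θ * (volume K + ε/2) + ENNReal.ofReal (1 - θ) * (volume L + ε/2) := by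
        gcongr
    _ = (volume (θ • K) + volume ((1 - θ) • L))
        + (ENNReal.ofReal θ + ENNReal.ofReal (1 - θ)) * ((ε:ℝ≥0∞)/2) := by
        rw [e1, e2]; ring
    _ = (volume (θ • K) + volume ((1 - θ) • L)) + (ε:ℝ≥0∞)/2 := by
        rw [hone, one_mul]
    _ ≤ volume C + ((ε:ℝ≥0∞)/2 + (ε:ℝ≥0∞)/2) := add_le_add hvol le_self_add
    _ = volume C + ε := by rw [ENNReal.add_halves]

lemma lintegral_scale (φ : ℝ → ℝ≥0∞) (hφ : Measurable φ) {k c : ℝ} (hk : 0 < k) :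
    ∫⁻ u in Ioo 0 c, φ (k * u) = ENNReal.ofReal k⁻¹ * ∫⁻ v in Ioo (0:ℝ) (k * c), φ v := by
  have hpre : (fun u => k * u) ⁻¹' (Ioo 0 (k * c)) = Ioo 0 c := by
    ext u
    simp only [mem_preimage, mem_Ioo]
    constructor
    · rintro ⟨h1, h2⟩
      constructor
      · by_contra hu
        push_neg at hu
        nlinarith
      · nlinarith
    · rintro ⟨h1, h2⟩
      exact ⟨by positivity, by nlinarith⟩
  calc ∫⁻ u in Ioo 0 c, φ (k * u)
      = ∫⁻ v, φ v ∂((volume.restrict (Ioo 0 c)).map (fun u => k * u)) := by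
        rw [lintegral_map hφ (measurable_const_mul k)]
    _ = ∫⁻ v, φ v ∂((volume.map (fun u => k * u)).restrict (Ioo 0 (k * c))) := by
        rw [Measure.restrict_map (measurable_const_mul k) measurableSet_Ioo, hpre]
    _ = ∫⁻ v, φ v ∂((ENNReal.ofReal |k⁻¹| • volume).restrict (Ioo 0 (k * c))) := by
        rw [Real.map_volume_mul_left hk.ne']
    _ = ENNReal.ofReal k⁻¹ * ∫⁻ v in Ioo (0:ℝ) (k * c), φ v := by
        rw [Measure.restrict_smul, lintegral_smul_measure, abs_of_pos (by positivity), smul_eq_mul]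

lemma phi_antitone (g : ℝ → ℝ) (z : ℝ) :
    Antitone (fun u => volume ({t | u < g t} ∩ Ioi z)) := by
  intro u v huv
  exact measure_mono (inter_subset_inter_left _ (fun t ht => lt_of_le_of_lt huv ht))

lemma phi_measurable (g : ℝ → ℝ) (z : ℝ) :
    Measurable (fun u => volume ({t | u < g t} ∩ Ioi z)) :=
  (phi_antitone g z).measurable

lemma layercake_tail (g : ℝ → ℝ) (hg : Measurable g) (hgnn : ∀ t, 0 ≤ g t)
    (hgint : Integrable g) (z : ℝ) :
    ENNReal.ofReal (∫ t in Ioi z, g t) = ∫⁻ u in Ioi (0:ℝ), volume ({t | u < g t} ∩ Ioi z) := by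
  rw [MeasureTheory.ofReal_integral_eq_lintegral_ofReal (hgint.restrict)
    (Filter.Eventually.of_forall hgnn),
    lintegral_eq_lintegral_meas_lt _ (Filter.Eventually.of_forall hgnn) hg.aemeasurable]
  refine lintegral_congr fun u => ?_
  rw [Measure.restrict_apply (measurableSet_lt measurable_const hg)]

lemma levelset_finite (g : ℝ → ℝ) (hg : Measurable g) (hgnn : ∀ t, 0 ≤ g t)
    (hgint : Integrable g) {s : ℝ} (hs : 0 < s) (z : ℝ) :
    volume ({t | s < g t} ∩ Ioi z) ≠ ⊤ := by
  have markov := mul_meas_ge_le_lintegral₀ (μ := volume)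
    (f := fun t => ENNReal.ofReal (g t)) (hg.ennreal_ofReal.aemeasurable) (ENNReal.ofReal s)
  have hfin : ∫⁻ t, ENNReal.ofReal (g t) < ⊤ := by
    rw [← MeasureTheory.ofReal_integral_eq_lintegral_ofReal hgint
      (Filter.Eventually.of_forall hgnn)]
    exact ENNReal.ofReal_lt_top
  have hsub : {t | s < g t} ∩ Ioi z ⊆ {t | ENNReal.ofReal s ≤ ENNReal.ofReal (g t)} :=
    fun t ht => ENNReal.ofReal_le_ofReal ht.1.le
  intro htop
  have h1 : volume {t | ENNReal.ofReal s ≤ ENNReal.ofReal (g t)} = ⊤ :=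
    top_le_iff.mp (htop ▸ measure_mono hsub)
  rw [h1, ENNReal.mul_top (by simp [hs] : ENNReal.ofReal s ≠ 0)] at markov
  exact absurd (top_le_iff.mp markov) hfin.ne

lemma exists_minorant {f : ℝ → ℝ} {M : ℝ} (hnn : ∀ x, 0 ≤ f x) (hM : ∀ x, f x ≤ M)
    (hae : AEMeasurable f (volume : Measure ℝ)) :
    ∃ g : ℝ → ℝ, Measurable g ∧ (∀ t, g t ≤ f t) ∧ g =ᵐ[volume] f ∧
      (∀ t, 0 ≤ g t) ∧ (∀ t, g t ≤ M) := by
  classical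
  have hnull : volume {t | ¬ f t = hae.mk f t} = 0 := by
    exact ae_iff.mp hae.ae_eq_mk
  obtain ⟨N, hNsup, hNmeas, hNnull⟩ := exists_measurable_superset_of_null hnull
  set g : ℝ → ℝ := N.piecewise 0 (hae.mk f) with hgdef
  have heq : ∀ t ∉ N, g t = f t := by
    intro t ht
    have hft : f t = hae.mk f t := by
      by_contra h; exact ht (hNsup h)
    simp [hgdef, Set.piecewise, ht, ← hft]
  refine ⟨g, Measurable.piecewise hNmeas measurable_const hae.measurable_mk, ?_, ?_, ?_, ?_⟩
  · intro t
    by_cases ht : t ∈ N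
    · simp [hgdef, Set.piecewise, ht, hnn t]
    · rw [heq t ht]
  · have : {t | ¬ g t = f t} ⊆ N := fun t ht => by
      by_contra h; exact ht (heq t h)
    rw [Filter.EventuallyEq, ae_iff]
    exact measure_mono_null this hNnull
  · intro t
    by_cases ht : t ∈ N
    · simp [hgdef, Set.piecewise, ht]
    · rw [heq t ht]; exact hnn t
  · intro t
    by_cases ht : t ∈ N
    · simp [hgdef, Set.piecewise, ht]
      exact le_trans (hnn 0) (hM 0)
    · rw [heq t ht]; exact hM t

lemma tail_bounded (f : ℝ → ℝ) (M : ℝ) (hnn : ∀ x, 0 ≤ f x) (hM : ∀ x, f x ≤ M)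
    (hint : Integrable f) (hlc : LogConcaveOn Set.univ f) :
    LogConcaveOn Set.univ (fun x => ∫ t in Set.Ioi x, f t) := by
  obtain ⟨g, hgmeas, hgle, hgae, hgnn, hgM⟩ := exists_minorant hnn hM hint.aemeasurable
  have hgint : Integrable g := hint.congr hgae.symm
  have hGg : ∀ z : ℝ, ∫ t in Ioi z, f t = ∫ t in Ioi z, g t := fun z =>
    integral_congr_ae (ae_restrict_of_ae hgae.symm)
  have hGnn : ∀ z : ℝ, 0 ≤ ∫ t in Ioi z, f t := fun z =>
    setIntegral_nonneg measurableSet_Ioi (fun t _ => hnn t)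
  intro x _ y _ θ hθ
  simp only
  obtain ⟨hθ0', hθ1'⟩ := hθ
  rcases eq_or_lt_of_le hθ0' with h0 | hθ0
  · rw [← h0]; norm_num
  rcases eq_or_lt_of_le hθ1' with h1 | hθ1
  · rw [h1]; norm_num
  set m := θ * x + (1 - θ) * y with hm
  set a := sSup (g '' Ioi x) with hadef
  set b := sSup (g '' Ioi y) with hbdef
  have hbddx : BddAbove (g '' Ioi x) := ⟨M, by rintro _ ⟨t, _, rfl⟩; exact hgM t⟩
  have hbddy : BddAbove (g '' Ioi y) := ⟨M, by rintro _ ⟨t, _, rfl⟩; exact hgM t⟩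
  have hax : ∀ t ∈ Ioi x, g t ≤ a := fun t ht => le_csSup hbddx ⟨t, ht, rfl⟩
  have hay : ∀ t ∈ Ioi y, g t ≤ b := fun t ht => le_csSup hbddy ⟨t, ht, rfl⟩
  have ha0 : 0 ≤ a := le_trans (hgnn (x+1)) (hax (x+1) (mem_Ioi.mpr (lt_add_one x)))
  have hb0 : 0 ≤ b := le_trans (hgnn (y+1)) (hay (y+1) (mem_Ioi.mpr (lt_add_one y)))
  rcases eq_or_lt_of_le ha0 with ha | ha
  · have hGx : ∫ t in Ioi x, f t = 0 := by
      have hz : EqOn g 0 (Ioi x) := fun t ht => by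
        have := hax t ht
        simp only [Pi.zero_apply]
        linarith [hgnn t]
      rw [hGg x, setIntegral_congr_fun measurableSet_Ioi hz]
      simp
    rw [hGx, Real.zero_rpow hθ0.ne', zero_mul]
    exact hGnn m
  rcases eq_or_lt_of_le hb0 with hb | hb
  · have hGy : ∫ t in Ioi y, f t = 0 := by
      have hz : EqOn g 0 (Ioi y) := fun t ht => by
        have := hay t ht
        simp only [Pi.zero_apply]
        linarith [hgnn t]
      rw [hGg y, setIntegral_congr_fun measurableSet_Ioi hz]
      simp
    rw [hGy, Real.zero_rpow (by linarith : 1 - θ ≠ 0), mul_zero]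
    exact hGnn m
  set c := a ^ θ * b ^ (1 - θ) with hcdef
  have hc : 0 < c := mul_pos (Real.rpow_pos_of_pos ha _) (Real.rpow_pos_of_pos hb _)
  -- pointwise level-set inequality
  have key : ∀ u ∈ Ioo (0:ℝ) c,
      ENNReal.ofReal θ * volume ({t | a / c * u < g t} ∩ Ioi x)
        + ENNReal.ofReal (1 - θ) * volume ({t | b / c * u < g t} ∩ Ioi y)
        ≤ volume ({t | u < g t} ∩ Ioi m) := by
    intro u hu
    have hCeq : volume ({t | u < g t} ∩ Ioi m) = volume ({t | u < f t} ∩ Ioi m) := by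
      apply measure_congr
      rw [Filter.eventuallyEq_set]
      filter_upwards [hgae] with t ht
      simp [ht]
    rw [hCeq]
    have haru : 0 < a / c * u := mul_pos (div_pos ha hc) hu.1
    have hbru : 0 < b / c * u := mul_pos (div_pos hb hc) hu.1
    have hA_ne : ({t | a / c * u < g t} ∩ Ioi x).Nonempty := by
      have hlt : a / c * u < a := by
        rw [div_mul_eq_mul_div, div_lt_iff₀ hc]
        nlinarith [hu.1, hu.2, ha]
      have hlt' : a / c * u < sSup (g '' Ioi x) := by rw [← hadef]; exact hlt
      obtain ⟨_, ⟨t, ht, rfl⟩, hlt2⟩ := exists_lt_of_lt_csSup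
        (⟨g (x+1), ⟨x+1, mem_Ioi.mpr (lt_add_one x), rfl⟩⟩ : (g '' Ioi x).Nonempty) hlt'
      exact ⟨t, hlt2, ht⟩
    have hB_ne : ({t | b / c * u < g t} ∩ Ioi y).Nonempty := by
      have hlt : b / c * u < b := by
        rw [div_mul_eq_mul_div, div_lt_iff₀ hc]
        nlinarith [hu.1, hu.2, hb]
      have hlt' : b / c * u < sSup (g '' Ioi y) := by rw [← hbdef]; exact hlt
      obtain ⟨_, ⟨t, ht, rfl⟩, hlt2⟩ := exists_lt_of_lt_csSup
        (⟨g (y+1), ⟨y+1, mem_Ioi.mpr (lt_add_one y), rfl⟩⟩ : (g '' Ioi y).Nonempty) hlt'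
      exact ⟨t, hlt2, ht⟩
    refine sumset_meas_scaled ⟨hθ0, hθ1⟩ _ _ _
      ((measurableSet_lt measurable_const hgmeas).inter measurableSet_Ioi)
      ((measurableSet_lt measurable_const hgmeas).inter measurableSet_Ioi)
      hA_ne hB_ne
      (levelset_finite g hgmeas hgnn hgint haru x)
      (levelset_finite g hgmeas hgnn hgint hbru y)
      ?_
    rintro s ⟨hs1, hs2⟩ t ⟨ht1, ht2⟩
    have hfs : a / c * u < f s := lt_of_lt_of_le hs1 (hgle s)
    have hft : b / c * u < f t := lt_of_lt_of_le ht1 (hgle t)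
    constructor
    · show u < f (θ * s + (1 - θ) * t)
      have hmain := hlc (mem_univ s) (mem_univ t) ⟨hθ0.le, hθ1.le⟩
      refine lt_of_lt_of_le ?_ hmain
      have e : (a / c * u) ^ θ * (b / c * u) ^ (1 - θ) = u := by
        rw [Real.mul_rpow (by positivity) hu.1.le, Real.mul_rpow (by positivity) hu.1.le]
        have h1 : u ^ θ * u ^ (1 - θ) = u := by
          rw [← Real.rpow_add hu.1]; norm_num
        have h2 : (a / c) ^ θ * (b / c) ^ (1 - θ) = 1 := by
          rw [Real.div_rpow ha0 hc.le, Real.div_rpow hb0 hc.le, div_mul_div_comm,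
            ← Real.rpow_add hc]
          have hθsum : θ + (1 - θ) = 1 := by ring
          rw [hθsum, Real.rpow_one, ← hcdef, div_self hc.ne']
        calc (a / c) ^ θ * u ^ θ * ((b / c) ^ (1 - θ) * u ^ (1 - θ))
            = ((a / c) ^ θ * (b / c) ^ (1 - θ)) * (u ^ θ * u ^ (1 - θ)) := by ring
          _ = u := by rw [h1, h2, one_mul]
      calc u = (a / c * u) ^ θ * (b / c * u) ^ (1 - θ) := e.symm
        _ < f s ^ θ * f t ^ (1 - θ) :=
          mul_lt_mul'' (Real.rpow_lt_rpow haru.le hfs hθ0)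
            (Real.rpow_lt_rpow hbru.le hft (by linarith))
            (Real.rpow_nonneg haru.le _) (Real.rpow_nonneg hbru.le _)
    · show θ * s + (1 - θ) * t ∈ Ioi m
      rw [mem_Ioi, hm]
      have hxs : x < s := hs2
      have hyt : y < t := ht2
      nlinarith [mul_pos hθ0 (sub_pos.mpr hxs),
        mul_pos (by linarith : (0:ℝ) < 1 - θ) (sub_pos.mpr hyt)]
  -- change of variables
  have tail_eq : ∀ z : ℝ, (∀ t ∈ Ioi z, g t ≤ sSup (g '' Ioi z)) → 0 < sSup (g '' Ioi z) →
      ∫⁻ v in Ioo (0:ℝ) (sSup (g '' Ioi z)), volume ({t | v < g t} ∩ Ioi z)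
        = ENNReal.ofReal (∫ t in Ioi z, f t) := by
    intro z hz hzpos
    rw [hGg z, layercake_tail g hgmeas hgnn hgint z, ← Ioo_union_Ici_eq_Ioi hzpos,
      lintegral_union measurableSet_Ici ((Iio_disjoint_Ici le_rfl).mono_left Ioo_subset_Iio_self)]
    have hzero : ∫⁻ v in Ici (sSup (g '' Ioi z)), volume ({t | v < g t} ∩ Ioi z) = 0 := by
      have hempty : ∀ v ∈ Ici (sSup (g '' Ioi z)),
          volume ({t | v < g t} ∩ Ioi z) = (0:ℝ≥0∞) := by
        intro v hv
        have he : {t | v < g t} ∩ Ioi z = ∅ := by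
          ext t
          simp only [mem_inter_iff, mem_setOf_eq, mem_Ioi, mem_empty_iff_false, iff_false,
            not_and]
          intro h1 h2
          exact absurd h1 (not_lt.mpr (le_trans (hz t h2) hv))
        rw [he, measure_empty]
      rw [setLIntegral_congr_fun measurableSet_Ici hempty,
        lintegral_zero]
    rw [hzero, add_zero]
  have covx : ∫⁻ u in Ioo (0:ℝ) c, volume ({t | a / c * u < g t} ∩ Ioi x)
      = ENNReal.ofReal (c / a) * ENNReal.ofReal (∫ t in Ioi x, f t) := by
    have h1 := lintegral_scale (fun v => volume ({t | v < g t} ∩ Ioi x)) (phi_measurable g x)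
      (div_pos ha hc) (c := c)
    rw [div_mul_cancel₀ a hc.ne'] at h1
    beta_reduce at h1
    rw [h1, inv_div]
    congr 1
    have := tail_eq x hax ha
    rw [← hadef] at this
    exact this
  have covy : ∫⁻ u in Ioo (0:ℝ) c, volume ({t | b / c * u < g t} ∩ Ioi y)
      = ENNReal.ofReal (c / b) * ENNReal.ofReal (∫ t in Ioi y, f t) := by
    have h1 := lintegral_scale (fun v => volume ({t | v < g t} ∩ Ioi y)) (phi_measurable g y)
      (div_pos hb hc) (c := c)
    rw [div_mul_cancel₀ b hc.ne'] at h1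
    beta_reduce at h1
    rw [h1, inv_div]
    congr 1
    have := tail_eq y hay hb
    rw [← hbdef] at this
    exact this
  -- main estimate in ℝ≥0∞
  have hmx : Measurable fun u => volume ({t | a / c * u < g t} ∩ Ioi x) :=
    (phi_measurable g x).comp (measurable_id.const_mul (a / c))
  have hmy : Measurable fun u => volume ({t | b / c * u < g t} ∩ Ioi y) :=
    (phi_measurable g y).comp (measurable_id.const_mul (b / c))
  have main : ENNReal.ofReal θ * (ENNReal.ofReal (c / a) * ENNReal.ofReal (∫ t in Ioi x, f t))
      + ENNReal.ofReal (1 - θ) * (ENNReal.ofReal (c / b) * ENNReal.ofReal (∫ t in Ioi y, f t))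
      ≤ ENNReal.ofReal (∫ t in Ioi m, f t) := by
    calc ENNReal.ofReal θ * (ENNReal.ofReal (c / a) * ENNReal.ofReal (∫ t in Ioi x, f t))
        + ENNReal.ofReal (1 - θ) * (ENNReal.ofReal (c / b) * ENNReal.ofReal (∫ t in Ioi y, f t))
        = ENNReal.ofReal θ * (∫⁻ u in Ioo (0:ℝ) c, volume ({t | a / c * u < g t} ∩ Ioi x))
          + ENNReal.ofReal (1 - θ) * (∫⁻ u in Ioo (0:ℝ) c, volume ({t | b / c * u < g t} ∩ Ioi y)) := by
          rw [covx, covy]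
      _ = ∫⁻ u in Ioo (0:ℝ) c, (ENNReal.ofReal θ * volume ({t | a / c * u < g t} ∩ Ioi x)
          + ENNReal.ofReal (1 - θ) * volume ({t | b / c * u < g t} ∩ Ioi y)) := by
          rw [lintegral_add_left (hmx.const_mul _), lintegral_const_mul _ hmx,
            lintegral_const_mul _ hmy]
      _ ≤ ∫⁻ u in Ioo (0:ℝ) c, volume ({t | u < g t} ∩ Ioi m) :=
          setLIntegral_mono (phi_measurable g m) key
      _ ≤ ∫⁻ u in Ioi (0:ℝ), volume ({t | u < g t} ∩ Ioi m) :=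
          lintegral_mono_set Ioo_subset_Ioi_self
      _ = ENNReal.ofReal (∫ t in Ioi m, f t) := by
          rw [hGg m, layercake_tail g hgmeas hgnn hgint m]
  -- back to the reals
  have hca : (0:ℝ) ≤ c / a := by positivity
  have hcb : (0:ℝ) ≤ c / b := by positivity
  have hsum_real : θ * (c / a * ∫ t in Ioi x, f t) + (1 - θ) * (c / b * ∫ t in Ioi y, f t)
      ≤ ∫ t in Ioi m, f t := by
    refine (ENNReal.ofReal_le_ofReal_iff (hGnn m)).mp ?_
    rw [ENNReal.ofReal_add (mul_nonneg hθ0.le (mul_nonneg hca (hGnn x)))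
        (mul_nonneg (by linarith) (mul_nonneg hcb (hGnn y))),
      ENNReal.ofReal_mul hθ0.le, ENNReal.ofReal_mul (by linarith : (0:ℝ) ≤ 1 - θ),
      ENNReal.ofReal_mul hca, ENNReal.ofReal_mul hcb]
    exact main
  -- AM-GM
  have amgm := Real.geom_mean_le_arith_mean2_weighted hθ0.le
    (by linarith : (0:ℝ) ≤ 1 - θ) (mul_nonneg hca (hGnn x)) (mul_nonneg hcb (hGnn y))
    (by ring : θ + (1 - θ) = 1)
  have eq1 : (c / a * ∫ t in Ioi x, f t) ^ θ * (c / b * ∫ t in Ioi y, f t) ^ (1 - θ)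
      = (∫ t in Ioi x, f t) ^ θ * (∫ t in Ioi y, f t) ^ (1 - θ) := by
    rw [Real.mul_rpow hca (hGnn x), Real.mul_rpow hcb (hGnn y)]
    have h2' : (c / a) ^ θ * (c / b) ^ (1 - θ) = 1 := by
      rw [Real.div_rpow hc.le ha0, Real.div_rpow hc.le hb0, div_mul_div_comm,
        ← Real.rpow_add hc, (by ring : θ + (1 - θ) = 1), Real.rpow_one, ← hcdef,
        div_self hc.ne']
    calc (c / a) ^ θ * (∫ t in Ioi x, f t) ^ θ
          * ((c / b) ^ (1 - θ) * (∫ t in Ioi y, f t) ^ (1 - θ))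
        = ((c / a) ^ θ * (c / b) ^ (1 - θ))
          * ((∫ t in Ioi x, f t) ^ θ * (∫ t in Ioi y, f t) ^ (1 - θ)) := by ring
      _ = (∫ t in Ioi x, f t) ^ θ * (∫ t in Ioi y, f t) ^ (1 - θ) := by rw [h2', one_mul]
  rw [← eq1]
  exact le_trans amgm hsum_real


/-- If an integrable nonnegative function `f` (e.g. a probability density) is log-concave
on `ℝ`, then its upper-tail function `G(x) = ∫_x^∞ f(t) dt` is log-concave on `ℝ`.
In particular the tail distribution of a random variable with log-concave density is
log-concave. -/
theorem tail_of_logconcave_density (f : ℝ → ℝ)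
    (hnn : ∀ x, 0 ≤ f x) (hint : Integrable f)
    (hlc : LogConcaveOn Set.univ f) :
    LogConcaveOn Set.univ (fun x => ∫ t in Set.Ioi x, f t) := by
  have hInt : ∀ n : ℕ, Integrable (fun t => min (f t) ((n:ℝ)+1)) := by
    intro n
    refine hint.mono' ((hint.aemeasurable.min aemeasurable_const).aestronglyMeasurable) ?_
    refine Filter.Eventually.of_forall fun t => ?_
    rw [Real.norm_eq_abs, abs_of_nonneg (le_min (hnn t) (by positivity))]
    exact min_le_left _ _
  have key : ∀ n : ℕ, LogConcaveOn Set.univ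
      (fun x => ∫ t in Set.Ioi x, min (f t) ((n:ℝ)+1)) := by
    intro n
    refine tail_bounded _ ((n:ℝ)+1) (fun t => le_min (hnn t) (by positivity))
      (fun t => min_le_right _ _) (hInt n) ?_
    intro u _ v _ τ hτ
    have hnn2 : ∀ w : ℝ, 0 ≤ min (f w) ((n:ℝ)+1) := fun w => le_min (hnn w) (by positivity)
    have h1 : min (f u) ((n:ℝ)+1) ^ τ * min (f v) ((n:ℝ)+1) ^ (1-τ) ≤ f u ^ τ * f v ^ (1-τ) :=
      mul_le_mul (Real.rpow_le_rpow (hnn2 u) (min_le_left _ _) hτ.1)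
        (Real.rpow_le_rpow (hnn2 v) (min_le_left _ _) (by linarith [hτ.2]))
        (Real.rpow_nonneg (hnn2 v) _) (Real.rpow_nonneg (hnn u) _)
    have h2 : min (f u) ((n:ℝ)+1) ^ τ * min (f v) ((n:ℝ)+1) ^ (1-τ) ≤ (n:ℝ)+1 := by
      calc min (f u) ((n:ℝ)+1) ^ τ * min (f v) ((n:ℝ)+1) ^ (1-τ)
          ≤ ((n:ℝ)+1) ^ τ * ((n:ℝ)+1) ^ (1-τ) :=
            mul_le_mul (Real.rpow_le_rpow (hnn2 u) (min_le_right _ _) hτ.1)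
              (Real.rpow_le_rpow (hnn2 v) (min_le_right _ _) (by linarith [hτ.2]))
              (Real.rpow_nonneg (hnn2 v) _) (Real.rpow_nonneg (by positivity) _)
        _ = (n:ℝ)+1 := by rw [← Real.rpow_add (by positivity)]; norm_num
    exact le_min (h1.trans (hlc (mem_univ u) (mem_univ v) hτ)) h2
  intro x _ y _ θ hθ
  simp only
  have hmono : ∀ t : ℝ, Monotone fun n : ℕ => min (f t) ((n:ℝ)+1) := fun t n k hnk =>
    min_le_min le_rfl (add_le_add_left (Nat.cast_le.mpr hnk) 1)
  have htend : ∀ t : ℝ, Tendsto (fun n : ℕ => min (f t) ((n:ℝ)+1)) atTop (nhds (f t)) := by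
    intro t
    refine tendsto_atTop_of_eventually_const (i₀ := ⌈f t⌉₊) fun n hn => ?_
    refine min_eq_left ((Nat.le_ceil (f t)).trans ?_)
    have : ((⌈f t⌉₊ : ℝ)) ≤ (n:ℝ) := Nat.cast_le.mpr hn
    linarith
  have h4 : ∀ z : ℝ, Tendsto (fun n : ℕ => ∫ t in Set.Ioi z, min (f t) ((n:ℝ)+1))
      atTop (nhds (∫ t in Set.Ioi z, f t)) := by
    intro z
    refine integral_tendsto_of_tendsto_of_monotone (fun n => (hInt n).restrict)
      hint.restrict ?_ ?_
    · exact Filter.Eventually.of_forall fun t => hmono t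
    · exact Filter.Eventually.of_forall fun t => htend t
  have hineq : ∀ n : ℕ,
      (∫ t in Set.Ioi x, min (f t) ((n:ℝ)+1)) ^ θ
        * (∫ t in Set.Ioi y, min (f t) ((n:ℝ)+1)) ^ (1-θ)
      ≤ ∫ t in Set.Ioi (θ*x+(1-θ)*y), min (f t) ((n:ℝ)+1) :=
    fun n => key n (mem_univ x) (mem_univ y) hθ
  exact le_of_tendsto_of_tendsto'
    (((h4 x).rpow_const (Or.inr hθ.1)).mul ((h4 y).rpow_const (Or.inr (by linarith [hθ.2]))))
    (h4 (θ*x+(1-θ)*y)) hineq
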